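/- (Invariance of path development under time-reparametrisation, discrete form.) Let M : ℝ^d →ₗ[ℝ] Matrix (Fin m) (Fin m) ℝ be linear, let x = (x_0, …, x_N) be a finite sequence in ℝ^d, and let λ : Fin (K+1) → Fin (N+1) be monotone nondecreasing and surjective. Then the discrete path development of the reparametrised sequence x ∘ λ = (x_{λ(0)}, …, x_{λ(K)}) equals that of x: D_M(x ∘ λ) = D_M(x). -/

import Mathlib

/-- The discrete path development of the sequence `x 0, …, x N` (indexed by `Fin (N+1)`)
under the linear map `M`: the ordered product
`exp (M (x 1 - x 0)) * ⋯ * exp (M (x N - x (N-1)))`. -/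
noncomputable def discreteDevFin (d m N : ℕ)
    (M : (Fin d → ℝ) →ₗ[ℝ] Matrix (Fin m) (Fin m) ℝ) (x : Fin (N + 1) → Fin d → ℝ) :
    Matrix (Fin m) (Fin m) ℝ :=
  ((List.finRange N).map
    (fun i => NormedSpace.exp (M (x i.succ - x i.castSucc)))).prod

lemma discreteDevFin_eq_ofFn (d m N : ℕ) (M : (Fin d → ℝ) →ₗ[ℝ] Matrix (Fin m) (Fin m) ℝ)
    (x : Fin (N + 1) → Fin d → ℝ) :
    discreteDevFin d m N M x =
      (List.ofFn (fun i : Fin N => NormedSpace.exp (M (x i.succ - x i.castSucc)))).prod := by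
  rw [discreteDevFin, List.ofFn_eq_map]

lemma discreteDevFin_zero (d m : ℕ) (M : (Fin d → ℝ) →ₗ[ℝ] Matrix (Fin m) (Fin m) ℝ)
    (x : Fin 1 → Fin d → ℝ) : discreteDevFin d m 0 M x = 1 := by
  simp [discreteDevFin]

lemma discreteDevFin_succ (d m N : ℕ) (M : (Fin d → ℝ) →ₗ[ℝ] Matrix (Fin m) (Fin m) ℝ)
    (x : Fin (N + 2) → Fin d → ℝ) :
    discreteDevFin d m (N + 1) M x =
      discreteDevFin d m N M (x ∘ Fin.castSucc) *
        NormedSpace.exp (M (x (Fin.last (N + 1)) - x ((Fin.last N).castSucc))) := by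
  rw [discreteDevFin_eq_ofFn, discreteDevFin_eq_ofFn, List.ofFn_succ', List.concat_eq_append,
    List.prod_append, List.prod_cons, List.prod_nil, mul_one]
  simp only [Fin.succ_last, Function.comp_apply, Fin.succ_castSucc]

lemma lam_last (K N : ℕ) (lam : Fin (K + 1) → Fin (N + 1)) (hmono : Monotone lam)
    (hsurj : Function.Surjective lam) : lam (Fin.last K) = Fin.last N := by
  obtain ⟨j, hj⟩ := hsurj (Fin.last N)
  exact le_antisymm (Fin.le_last _) (hj ▸ hmono (Fin.le_last j))

lemma aux (d m : ℕ) (M : (Fin d → ℝ) →ₗ[ℝ] Matrix (Fin m) (Fin m) ℝ) :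
    ∀ K N (x : Fin (N + 1) → Fin d → ℝ) (lam : Fin (K + 1) → Fin (N + 1)),
      Monotone lam → Function.Surjective lam →
      discreteDevFin d m K M (x ∘ lam) = discreteDevFin d m N M x := by
  intro K
  induction K with
  | zero =>
    intro N x lam hmono hsurj
    have hN : N = 0 := by
      have := Fintype.card_le_of_surjective lam hsurj
      simpa using this
    subst hN
    rw [discreteDevFin_zero, discreteDevFin_zero]
  | succ K ih =>
    intro N x lam hmono hsurj
    have hlast : lam (Fin.last (K + 1)) = Fin.last N := lam_last _ _ lam hmono hsurj
    rw [discreteDevFin_succ]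
    by_cases hcase : lam ((Fin.last K).castSucc) = Fin.last N
    · -- last step is trivial
      have hsurj' : Function.Surjective (lam ∘ Fin.castSucc) := by
        intro v
        obtain ⟨j, hj⟩ := hsurj v
        rcases eq_or_ne j (Fin.last (K + 1)) with rfl | hne
        · exact ⟨Fin.last K, hcase.trans (hlast.symm.trans hj)⟩
        · exact ⟨(j.castPred hne), by simp [hj]⟩
      have := ih N x (lam ∘ Fin.castSucc) (hmono.comp Fin.strictMono_castSucc.monotone) hsurj'
      rw [show x ∘ lam ∘ Fin.castSucc = (x ∘ lam) ∘ Fin.castSucc from rfl] at this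
      rw [this]
      simp [Function.comp_apply, hlast, hcase]
    · -- last step jumps by one
      have hNpos : N ≠ 0 := by
        rintro rfl
        have h1 := (lam ((Fin.last K).castSucc)).is_lt
        exact hcase (Fin.ext (by simp only [Fin.val_last];exact Nat.lt_one_iff.mp h1))
      obtain ⟨N', rfl⟩ : ∃ N', N = N' + 1 :=
        ⟨N - 1, (Nat.succ_pred_eq_of_pos (Nat.pos_of_ne_zero hNpos)).symm⟩
      have hlt : lam ((Fin.last K).castSucc) < Fin.last (N' + 1) :=
        lt_of_le_of_ne (hlast ▸ hmono (Fin.le_last _)) hcase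
      have hval : (lam ((Fin.last K).castSucc)).val = N' := by
        by_contra hne
        have hlt' : (lam ((Fin.last K).castSucc)).val < N' :=
          lt_of_le_of_ne (Nat.lt_succ_iff.mp hlt) hne
        obtain ⟨j, hj⟩ := hsurj ⟨N', Nat.lt_succ_of_lt (Nat.lt_succ_self N')⟩
        rcases eq_or_ne j (Fin.last (K + 1)) with rfl | hne'
        · rw [hlast] at hj
          exact absurd (congrArg Fin.val hj) (by simp)
        · have hle : j ≤ (Fin.last K).castSucc := by
            rcases Fin.lt_or_lt_of_ne hne' with h | h
            · exact Fin.le_castSucc_iff.mpr (by simpa [Fin.succ_last] using h)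
            · exact absurd h (not_lt.mpr (Fin.le_last _))
          have h2 := hmono hle
          rw [hj] at h2
          have h3 := Fin.le_def.mp h2
          simp at h3
          omega
      have hbound : ∀ i : Fin (K + 1), (lam i.castSucc).val < N' + 1 := by
        intro i
        have h1 := Fin.le_def.mp (hmono (Fin.castSucc_le_castSucc_iff.mpr (Fin.le_last i)))
        omega
      set lam' : Fin (K + 1) → Fin (N' + 1) := fun i => Fin.castLT (lam i.castSucc) (hbound i)
        with hlam'
      have hmono2 : Monotone lam' := fun a b hab =>
        hmono (Fin.castSucc_le_castSucc_iff.mpr hab)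
      have hsurj2 : Function.Surjective lam' := by
        intro v
        obtain ⟨j, hj⟩ := hsurj v.castSucc
        have hjne : j ≠ Fin.last (K + 1) := by
          rintro rfl
          rw [hlast] at hj
          have h4 := congrArg Fin.val hj
          simp at h4
          omega
        refine ⟨j.castPred hjne, Fin.ext ?_⟩
        simpa [hlam'] using congrArg Fin.val hj
      have hcomp : (x ∘ lam) ∘ Fin.castSucc = (x ∘ Fin.castSucc) ∘ lam' := by
        funext i
        have h5 : Fin.castSucc (Fin.castLT (lam i.castSucc) (hbound i)) = lam i.castSucc :=
          Fin.ext rfl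
        simp only [Function.comp_apply, hlam', h5]
      have h6 : lam ((Fin.last K).castSucc) = (Fin.last N').castSucc :=
        Fin.ext (by simpa using hval)
      rw [hcomp, ih N' (x ∘ Fin.castSucc) lam' hmono2 hsurj2]
      simp only [Function.comp_apply, hlast, h6]
      rw [discreteDevFin_succ]

/-- Invariance of the discrete path development under time-reparametrisation: if
`lam : Fin (K+1) → Fin (N+1)` is monotone nondecreasing and surjective, then the
development of the reparametrised sequence `x ∘ lam` equals that of `x`. -/
theorem statement3 (d m N K : ℕ) (M : (Fin d → ℝ) →ₗ[ℝ] Matrix (Fin m) (Fin m) ℝ)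
    (x : Fin (N + 1) → Fin d → ℝ) (lam : Fin (K + 1) → Fin (N + 1))
    (hmono : Monotone lam) (hsurj : Function.Surjective lam) :
    discreteDevFin d m K M (x ∘ lam) = discreteDevFin d m N M x := by
  exact aux d m M K N x lam hmono hsurj
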